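/- Under the same setup (weighted Laplacian B of a connected graph, Bθ = P, Bθ̂ = P + Γ(e_s − e_t), Γ > 0), if k ≠ t is a vertex such that every path in G from s to k passes through t, then θ̂_k − θ̂_t = θ_k − θ_t. -/

import Mathlib

open Matrix

/-- Lemma 3 (nochange): if every path from s to k passes through t, the
relative phase angle of k with respect to t is unchanged. -/
theorem stmt_1 {n : ℕ} (G : SimpleGraph (Fin n)) (hconn : G.Connected)
    (w : Fin n → Fin n → ℝ)
    (hsym : ∀ k m, w k m = w m k)
    (hpos : ∀ k m, G.Adj k m → 0 < w k m)
    (hzero : ∀ k m, ¬ G.Adj k m → w k m = 0)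
    (B : Matrix (Fin n) (Fin n) ℝ)
    (hB : ∀ k m, B k m = if k = m then ∑ j, w k j else -(w k m))
    (θ θhat P : Fin n → ℝ) (s t : Fin n) (Γ : ℝ) (hΓ : 0 < Γ)
    (h1 : B.mulVec θ = P)
    (h2 : B.mulVec θhat = P + Γ • ((Pi.single s 1 : Fin n → ℝ) - Pi.single t 1))
    (k : Fin n) (hk : k ≠ t)
    (hpath : ∀ p : G.Walk s k, t ∈ p.support) :
    θhat k - θhat t = θ k - θ t := by
  classical
  set d : Fin n → ℝ := fun u => θhat u - θ u with hd
  have hwnn : ∀ u v, 0 ≤ w u v := by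
    intro u v
    by_cases h : G.Adj u v
    · exact (hpos u v h).le
    · rw [hzero u v h]
  have hwdiag : ∀ u, w u u = 0 := fun u => hzero u u (G.irrefl)
  have hBd : ∀ u, ∑ v, B u v * d v
      = Γ * ((if u = s then (1:ℝ) else 0) - if u = t then 1 else 0) := by
    intro u
    have h3 : B.mulVec θhat - B.mulVec θ
        = Γ • ((Pi.single s 1 : Fin n → ℝ) - Pi.single t 1) := by
      rw [h1, h2]; abel
    have h4 := congrFun h3 u
    simp only [Pi.sub_apply, Pi.smul_apply, smul_eq_mul, mulVec, dotProduct] at h4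
    calc ∑ v, B u v * d v = ∑ v, (B u v * θhat v - B u v * θ v) := by
          apply Finset.sum_congr rfl; intro v _; simp only [hd]; ring
      _ = (∑ v, B u v * θhat v) - ∑ v, B u v * θ v := Finset.sum_sub_distrib _ _
      _ = _ := by rw [h4]; simp [Pi.single_apply]
  have hrow : ∀ u, ∑ v, B u v = 0 := by
    intro u
    have hbv : ∀ v, B u v = (if u = v then (∑ j, w u j) + w u v else 0) - w u v := by
      intro v
      by_cases h : u = v
      · subst h; simp [hB, hwdiag]
      · simp [hB, h]
    rw [Finset.sum_congr rfl (fun v _ => hbv v), Finset.sum_sub_distrib,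
        Finset.sum_ite_eq]
    simp [hwdiag]
  set g : Fin n → ℝ := fun u =>
    if ∃ p : G.Walk k u, t ∉ p.support then d u - d t else 0 with hgdef
  have hkS : ∃ p : G.Walk k k, t ∉ p.support :=
    ⟨SimpleGraph.Walk.nil, by simp [SimpleGraph.Walk.support_nil]; exact Ne.symm hk⟩
  have hgk : g k = d k - d t := by simp only [hgdef]; rw [if_pos hkS]
  have hgt : g t = 0 := by
    have hnt : ¬ ∃ p : G.Walk k t, t ∉ p.support := by
      rintro ⟨p, hp⟩; exact hp p.end_mem_support
    simp only [hgdef]; rw [if_neg hnt]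
  have hgs : g s = 0 := by
    have hns : ¬ ∃ p : G.Walk k s, t ∉ p.support := by
      rintro ⟨p, hp⟩
      apply hp
      have := hpath p.reverse
      rwa [SimpleGraph.Walk.support_reverse, List.mem_reverse] at this
    simp only [hgdef]; rw [if_neg hns]
  have hprop : ∀ u v, (∃ p : G.Walk k u, t ∉ p.support) → G.Adj u v → v ≠ t →
      ∃ p : G.Walk k v, t ∉ p.support := by
    rintro u v ⟨p, hp⟩ hadj hvt
    refine ⟨p.concat hadj, ?_⟩
    rw [SimpleGraph.Walk.support_concat]
    simp only [List.mem_append, List.mem_singleton]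
    rintro (h | h)
    · exact hp h
    · exact hvt h.symm
  -- Step A: sum of g u * (B d)_u = 0
  have hS1 : ∑ u, g u * ∑ v, B u v * d v = 0 := by
    have step : ∀ u, g u * ∑ v, B u v * d v
        = (if u = s then Γ * g u else 0) - (if u = t then Γ * g u else 0) := by
      intro u
      rw [hBd u]
      by_cases h1 : u = s
      · by_cases h2 : u = t
        · simp [h1, h2, h1.symm.trans h2]
        · have hst : s ≠ t := fun h => h2 (h1.trans h)
          simp [h1, h2, hst, hst.symm]; ring
      · by_cases h2 : u = t
        · have hts : t ≠ s := fun h => h1 (h2.trans h)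
          simp [h1, h2, hts, hts.symm]; ring
        · simp [h1, h2]
    rw [Finset.sum_congr rfl (fun u _ => step u), Finset.sum_sub_distrib,
        Finset.sum_ite_eq', Finset.sum_ite_eq']
    simp [hgs, hgt]
  -- Step B: replace d by d - d t (shift), using row sums zero
  have hS2 : ∑ u, ∑ v, g u * (B u v * (d v - d t)) = 0 := by
    have step : ∀ u, ∑ v, g u * (B u v * (d v - d t))
        = g u * ∑ v, B u v * d v - g u * d t * ∑ v, B u v := by
      intro u
      rw [Finset.mul_sum, Finset.mul_sum, ← Finset.sum_sub_distrib]
      apply Finset.sum_congr rfl; intro v _; ring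
    rw [Finset.sum_congr rfl (fun u _ => step u), Finset.sum_sub_distrib]
    have : ∀ u, g u * d t * ∑ v, B u v = 0 := fun u => by rw [hrow]; ring
    rw [Finset.sum_congr rfl (fun u _ => this u), hS1]
    simp
  -- Step B2: replace (d - d t) by g
  have hS3 : ∑ u, ∑ v, g u * B u v * g v = 0 := by
    have key : ∀ u v, g u * B u v * g v = g u * (B u v * (d v - d t)) := by
      intro u v
      by_cases hu : ∃ p : G.Walk k u, t ∉ p.support
      · by_cases hv : ∃ p : G.Walk k v, t ∉ p.support
        · have : g v = d v - d t := by simp only [hgdef]; rw [if_pos hv]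
          rw [this]; ring
        · have hgv : g v = 0 := by simp only [hgdef]; rw [if_neg hv]
          by_cases hvt : v = t
          · subst hvt; rw [hgv]; ring_nf
          · have huv : u ≠ v := fun h => hv (h ▸ hu)
            have hnadj : ¬ G.Adj u v := fun h => hv (hprop u v hu h hvt)
            have : B u v = 0 := by rw [hB, if_neg huv, hzero u v hnadj, neg_zero]
            rw [this]; ring
      · have hgu : g u = 0 := by simp only [hgdef]; rw [if_neg hu]
        rw [hgu]; ring
    calc ∑ u, ∑ v, g u * B u v * g v
        = ∑ u, ∑ v, g u * (B u v * (d v - d t)) := by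
          apply Finset.sum_congr rfl; intro u _
          exact Finset.sum_congr rfl fun v _ => key u v
      _ = 0 := hS2
  -- quadratic form identity
  have hquad : ∀ u, ∑ v, g u * B u v * g v
      = (∑ v, w u v * g u ^ 2) - ∑ v, w u v * (g u * g v) := by
    intro u
    have hbv : ∀ v, g u * B u v * g v
        = (if u = v then ((∑ j, w u j) + w u v) * (g u * g v) else 0)
          - w u v * (g u * g v) := by
      intro v
      by_cases h : u = v
      · subst h
        have hBuu : B u u = ∑ j, w u j := by rw [hB, if_pos rfl]
        rw [hBuu, if_pos rfl]; ring
      · rw [hB, if_neg h, if_neg h]; ring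
    rw [Finset.sum_congr rfl (fun v _ => hbv v), Finset.sum_sub_distrib,
        Finset.sum_ite_eq, if_pos (Finset.mem_univ u), hwdiag u, add_zero]
    congr 1
    · rw [Finset.sum_mul]
      apply Finset.sum_congr rfl; intro v _; ring
  have hswap : ∑ u, ∑ v, w u v * g v ^ 2 = ∑ u, ∑ v, w u v * g u ^ 2 := by
    rw [Finset.sum_comm]
    apply Finset.sum_congr rfl; intro u _
    apply Finset.sum_congr rfl; intro v _
    rw [hsym]
  have hE : ∑ u, ∑ v, w u v * (g u - g v) ^ 2 = 0 := by
    have expand : ∀ u v, w u v * (g u - g v) ^ 2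
        = (w u v * g u ^ 2 + w u v * g v ^ 2) - 2 * (w u v * (g u * g v)) := by
      intro u v; ring
    calc ∑ u, ∑ v, w u v * (g u - g v) ^ 2
        = ∑ u, ((∑ v, w u v * g u ^ 2 + ∑ v, w u v * g v ^ 2)
            - 2 * ∑ v, w u v * (g u * g v)) := by
          apply Finset.sum_congr rfl; intro u _
          rw [Finset.sum_congr rfl (fun v _ => expand u v), Finset.sum_sub_distrib,
              Finset.sum_add_distrib, Finset.mul_sum]
      _ = ((∑ u, ∑ v, w u v * g u ^ 2) + ∑ u, ∑ v, w u v * g v ^ 2)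
            - 2 * ∑ u, ∑ v, w u v * (g u * g v) := by
          rw [Finset.sum_sub_distrib, Finset.sum_add_distrib, Finset.mul_sum]
      _ = 2 * ((∑ u, ∑ v, w u v * g u ^ 2) - ∑ u, ∑ v, w u v * (g u * g v)) := by
          rw [hswap]; ring
      _ = 2 * ∑ u, ∑ v, g u * B u v * g v := by
          rw [← Finset.sum_sub_distrib]
          congr 1
          apply Finset.sum_congr rfl; intro u _
          rw [hquad u]
      _ = 0 := by rw [hS3]; ring
  have hterm : ∀ u v, w u v * (g u - g v) ^ 2 = 0 := by
    have houter := (Finset.sum_eq_zero_iff_of_nonneg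
      (fun u _ => Finset.sum_nonneg fun v _ =>
        mul_nonneg (hwnn u v) (sq_nonneg _))).mp hE
    intro u v
    have hinner := (Finset.sum_eq_zero_iff_of_nonneg
      (fun v _ => mul_nonneg (hwnn u v) (sq_nonneg _))).mp
      (houter u (Finset.mem_univ u))
    exact hinner v (Finset.mem_univ v)
  have hadjeq : ∀ u v, G.Adj u v → g u = g v := by
    intro u v h
    have hz := hterm u v
    have := (mul_eq_zero.mp hz).resolve_left (ne_of_gt (hpos u v h))
    have := pow_eq_zero_iff (two_ne_zero) |>.mp this
    linarith [sub_eq_zero.mp this]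
  have hwalk : ∀ {a b : Fin n}, G.Walk a b → g a = g b := by
    intro a b p
    induction p with
    | nil => rfl
    | cons h p ih => exact (hadjeq _ _ h).trans ih
  obtain ⟨p⟩ := hconn.preconnected k t
  have : g k = g t := hwalk p
  rw [hgk, hgt] at this
  simp only [hd] at this
  linarith
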